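/- (Phase-cohesive basins of attraction on general Kuramoto networks) Let A = (a_{ij}) be a symmetric n×n real matrix with nonnegative entries such that the graph on {1, ..., n} whose edges are the pairs with a_{ij} > 0 is connected, and consider the Kuramoto dynamics with identical natural frequencies, which in a rotating frame is θ̇_i = Σ_j a_{ij} sin(θ_j − θ_i). Let θ* ∈ ℝ^n be an equilibrium and let γ ∈ [0, π/2) be such that |θ*_i − θ*_j| < γ whenever a_{ij} > 0. Then for every differentiable solution θ : [0, ∞) → ℝ^n of the dynamics with max_k |θ_k(0) − θ*_k| < π/2 − γ, there exists a constant c ∈ ℝ such that θ(t) converges to θ* + c·(1, ..., 1) as t → ∞. -/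

import Mathlib

open Real Set

lemma sin_quant {γ r d δ : ℝ} (hγ : 0 ≤ γ) (hr : 0 < r) (hγr : γ + r < π/2)
    (hd : |d| ≤ γ) (hδ : |δ| ≤ 2*r) :
    2 * Real.cos (γ + r) / π * δ^2 ≤ δ * (Real.sin (d + δ) - Real.sin d) := by
  have hπ := Real.pi_pos
  have hexp : Real.sin (d + δ) - Real.sin d = 2 * Real.sin (δ/2) * Real.cos (d + δ/2) := by
    rw [Real.sin_sub_sin]; ring_nf
  have habs : |d + δ/2| ≤ γ + r := by
    have := abs_add_le d (δ/2)
    have : |δ/2| ≤ r := by rw [abs_div]; simp; linarith [abs_nonneg δ]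
    calc |d + δ/2| ≤ |d| + |δ/2| := abs_add_le _ _
      _ ≤ γ + r := by linarith
  have hcos1 : Real.cos (γ + r) ≤ Real.cos (d + δ/2) := by
    rw [← Real.cos_abs (d + δ/2)]
    exact Real.cos_le_cos_of_nonneg_of_le_pi (abs_nonneg _) (by linarith) habs
  have hcos0 : 0 ≤ Real.cos (γ + r) :=
    Real.cos_nonneg_of_mem_Icc ⟨by linarith, by linarith⟩
  have hjord : δ^2 / π ≤ δ * Real.sin (δ/2) := by
    rcases le_total 0 δ with h | h
    · have h1 : 2/π * (δ/2) ≤ Real.sin (δ/2) :=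
        Real.mul_le_sin (by linarith) (by rw [abs_le] at hδ; linarith)
      calc δ^2/π = δ * (2/π * (δ/2)) := by field_simp
        _ ≤ δ * Real.sin (δ/2) := by
          apply mul_le_mul_of_nonneg_left h1 h
    · have h1 : 2/π * (-δ/2) ≤ Real.sin (-δ/2) :=
        Real.mul_le_sin (by linarith) (by rw [abs_le] at hδ; linarith)
      rw [show (-δ/2) = -(δ/2) by ring, Real.sin_neg] at h1
      calc δ^2/π = (-δ) * (2/π * (-δ/2)) := by field_simp
        _ ≤ (-δ) * (-Real.sin (δ/2)) := by
          have := mul_le_mul_of_nonneg_left h1 (show (0:ℝ) ≤ -δ by linarith)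
          linarith [this]
        _ = δ * Real.sin (δ/2) := by ring
  have hsgn : 0 ≤ δ * Real.sin (δ/2) := le_trans (by positivity) hjord
  rw [hexp]
  calc 2 * Real.cos (γ+r) / π * δ^2 = 2 * (Real.cos (γ+r) * (δ^2/π)) := by ring
    _ ≤ 2 * (Real.cos (d + δ/2) * (δ * Real.sin (δ/2))) := by
        apply mul_le_mul_of_nonneg_left (mul_le_mul hcos1 hjord (by positivity) (by linarith)) (by norm_num)
    _ = δ * (2 * Real.sin (δ/2) * Real.cos (d + δ/2)) := by ring


lemma sin_diff_nonneg {γ r d δ : ℝ} (hγ : 0 ≤ γ) (hr : 0 < r) (hγr : γ + r < π/2)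
    (hd : |d| ≤ γ) (hδ : |δ| ≤ 2*r) (h0 : 0 ≤ δ) :
    0 ≤ Real.sin (d + δ) - Real.sin d := by
  rcases eq_or_lt_of_le h0 with h | h
  · simp [← h]
  · have := sin_quant hγ hr hγr hd hδ
    have h2 : 0 ≤ 2 * Real.cos (γ + r) / π * δ^2 := by
      have : 0 ≤ Real.cos (γ + r) := Real.cos_nonneg_of_mem_Icc ⟨by linarith [Real.pi_pos], by linarith⟩
      positivity
    nlinarith


lemma sin_diff_nonpos {γ r d δ : ℝ} (hγ : 0 ≤ γ) (hr : 0 < r) (hγr : γ + r < π/2)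
    (hd : |d| ≤ γ) (hδ : |δ| ≤ 2*r) (h0 : δ ≤ 0) :
    Real.sin (d + δ) - Real.sin d ≤ 0 := by
  rcases eq_or_lt_of_le h0 with h | h
  · simp [h]
  · have := sin_quant hγ hr hγr hd hδ
    have h2 : 0 ≤ 2 * Real.cos (γ + r) / π * δ^2 := by
      have : 0 ≤ Real.cos (γ + r) := Real.cos_nonneg_of_mem_Icc ⟨by linarith [Real.pi_pos], by linarith⟩
      positivity
    nlinarith



lemma sum_antisym_mul {n : ℕ} (G : Fin n → Fin n → ℝ) (hG : ∀ i j, G j i = -G i j)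
    (c : Fin n → ℝ) :
    ∑ i, ∑ j, G i j * c i = (1/2) * ∑ i, ∑ j, G i j * (c i - c j) := by
  have hswap : ∑ i, ∑ j, G i j * c j = -∑ i, ∑ j, G i j * c i := by
    rw [Finset.sum_comm]
    rw [← Finset.sum_neg_distrib]
    apply Finset.sum_congr rfl; intro i _
    rw [← Finset.sum_neg_distrib]
    apply Finset.sum_congr rfl; intro j _
    rw [hG i j]; ring
  have hsplit : ∑ i, ∑ j, G i j * (c i - c j)
      = (∑ i, ∑ j, G i j * c i) - (∑ i, ∑ j, G i j * c j) := by
    rw [← Finset.sum_sub_distrib]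
    apply Finset.sum_congr rfl; intro i _
    rw [← Finset.sum_sub_distrib]
    apply Finset.sum_congr rfl; intro j _; ring
  rw [hsplit, hswap]; ring


lemma sum_antisym_zero {n : ℕ} (G : Fin n → Fin n → ℝ) (hG : ∀ i j, G j i = -G i j) :
    ∑ i, ∑ j, G i j = 0 := by
  have := sum_antisym_mul G hG (fun _ => 1)
  simpa using this

/-- Continuous induction: if `f` stays `≤ f 0` on any interval where it stays `≤ B`,
and `f 0 < B`, then `f ≤ f 0` on all of `[0, ∞)`. -/

lemma cont_induction {f : ℝ → ℝ} {B : ℝ} (hf : ContinuousOn f (Set.Ici 0))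
    (h0 : f 0 < B)
    (hind : ∀ T, 0 ≤ T → (∀ s ∈ Set.Icc 0 T, f s ≤ B) → ∀ s ∈ Set.Icc 0 T, f s ≤ f 0) :
    ∀ t, 0 ≤ t → f t ≤ f 0 := by
  intro t ht
  by_cases hB : ∀ s ∈ Set.Icc 0 t, f s ≤ B
  · exact hind t ht hB t ⟨ht, le_refl t⟩
  push_neg at hB
  obtain ⟨s1, hs1, hs1B⟩ := hB
  exfalso
  set E := Set.Icc 0 t ∩ f ⁻¹' (Set.Ici B) with hE
  have hfc : ContinuousOn f (Set.Icc 0 t) := hf.mono (fun z hz => hz.1)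
  have hEc : IsClosed E := hfc.preimage_isClosed_of_isClosed isClosed_Icc isClosed_Ici
  have hEne : E.Nonempty := ⟨s1, hs1, le_of_lt hs1B⟩
  have hEbdd : BddBelow E := ⟨0, fun z hz => hz.1.1⟩
  set T0 := sInf E with hT0
  have hT0E : T0 ∈ E := hEc.csInf_mem hEne hEbdd
  have hT0pos : 0 < T0 := by
    rcases lt_or_eq_of_le hT0E.1.1 with h | h
    · exact h
    · exfalso; have := hT0E.2; rw [← h] at this; exact absurd this (not_le.mpr h0)
  have hlt : ∀ s ∈ Set.Ico (0:ℝ) T0, f s < B := by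
    intro s hs
    by_contra hc
    push_neg at hc
    have : s ∈ E := ⟨⟨hs.1, le_trans (le_of_lt hs.2) hT0E.1.2⟩, hc⟩
    exact absurd (csInf_le hEbdd this) (not_le.mpr hs.2)
  have hT0B : f T0 ≤ B := by
    have hcl : T0 ∈ closure (Set.Ico (0:ℝ) T0) := by
      rw [closure_Ico (ne_of_lt hT0pos)]
      exact ⟨le_of_lt hT0pos, le_refl _⟩
    have hne : (nhdsWithin T0 (Set.Ico (0:ℝ) T0)).NeBot :=
      mem_closure_iff_nhdsWithin_neBot.mp hcl
    have htend : Filter.Tendsto f (nhdsWithin T0 (Set.Ico (0:ℝ) T0)) (nhds (f T0)) := by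
      have : ContinuousWithinAt f (Set.Ici 0) T0 := hf T0 (le_of_lt hT0pos)
      exact this.mono (fun z hz => hz.1) |>.tendsto
    exact le_of_tendsto htend (Filter.eventually_of_mem self_mem_nhdsWithin
      (fun s hs => le_of_lt (hlt s hs)))
  have hall : ∀ s ∈ Set.Icc 0 T0, f s ≤ B := by
    intro s hs
    rcases lt_or_eq_of_le hs.2 with h | h
    · exact le_of_lt (hlt s ⟨hs.1, h⟩)
    · rw [h]; exact hT0B
  have := hind T0 (le_of_lt hT0pos) hall T0 ⟨le_of_lt hT0pos, le_refl _⟩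
  have h2 : B ≤ f T0 := hT0E.2
  linarith


lemma const_of_deriv_zero {f : ℝ → ℝ} (hf : ∀ t ∈ Set.Ici (0:ℝ), HasDerivAt f 0 t) :
    ∀ t ∈ Set.Ici (0:ℝ), f t = f 0 := by
  intro t ht
  rcases eq_or_lt_of_le (Set.mem_Ici.mp ht) with h | h
  · rw [← h]
  · refine constant_of_has_deriv_right_zero (f := f) (a := 0) (b := t) ?_ ?_ t ⟨le_of_lt h, le_refl t⟩
    · intro s hs
      exact ((hf s hs.1).continuousAt).continuousWithinAt
    · intro s hs
      exact (hf s hs.1).hasDerivWithinAt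


lemma fiedler {n : ℕ} (A : Matrix (Fin n) (Fin n) ℝ) (hsymm : A.IsSymm)
    (hnonneg : ∀ i j, 0 ≤ A i j)
    (hconn : (SimpleGraph.fromRel (fun i j : Fin n => 0 < A i j)).Connected) :
    ∃ lam : ℝ, 0 < lam ∧ ∀ y : Fin n → ℝ, ∑ i, y i = 0 →
      lam * ∑ i, (y i)^2 ≤ ∑ i, ∑ j, A i j * (y i - y j)^2 := by
  classical
  have hne : Nonempty (Fin n) := hconn.nonempty
  set Q : (Fin n → ℝ) → ℝ := fun y => ∑ i, ∑ j, A i j * (y i - y j)^2 with hQ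
  have hQ0 : ∀ y, 0 ≤ Q y := by
    intro y
    apply Finset.sum_nonneg; intro i _
    apply Finset.sum_nonneg; intro j _
    exact mul_nonneg (hnonneg i j) (sq_nonneg _)
  have hQcont : Continuous Q := by
    apply continuous_finset_sum; intro i _
    apply continuous_finset_sum; intro j _
    exact continuous_const.mul (((continuous_apply i).sub (continuous_apply j)).pow 2)
  set K : Set (Fin n → ℝ) := {y | ∑ i, y i = 0 ∧ ∑ i, (y i)^2 = 1} with hK
  -- scaling helper: nonzero zero-sum vectors normalize into K
  have hscale : ∀ y : Fin n → ℝ, ∑ i, y i = 0 → ∑ i, (y i)^2 ≠ 0 →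
      (fun i => y i / Real.sqrt (∑ i, (y i)^2)) ∈ K ∧
      Q (fun i => y i / Real.sqrt (∑ i, (y i)^2)) = Q y / (∑ i, (y i)^2) := by
    intro y hy hs
    have hspos : 0 < ∑ i, (y i)^2 :=
      lt_of_le_of_ne (Finset.sum_nonneg fun i _ => sq_nonneg _) (Ne.symm hs)
    have hsq : Real.sqrt (∑ i, (y i)^2) ^ 2 = ∑ i, (y i)^2 := Real.sq_sqrt hspos.le
    have hsqpos : 0 < Real.sqrt (∑ i, (y i)^2) := Real.sqrt_pos.mpr hspos
    refine ⟨⟨?_, ?_⟩, ?_⟩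
    · rw [← Finset.sum_div, hy, zero_div]
    · have : ∑ i, (y i / Real.sqrt (∑ i, (y i)^2))^2
          = (∑ i, (y i)^2) / (Real.sqrt (∑ i, (y i)^2))^2 := by
        rw [Finset.sum_div]
        apply Finset.sum_congr rfl; intro i _; rw [div_pow]
      rw [this, hsq, div_self hs]
    · rw [hQ]
      simp only
      rw [Finset.sum_div]
      apply Finset.sum_congr rfl; intro i _
      rw [Finset.sum_div]
      apply Finset.sum_congr rfl; intro j _
      rw [div_sub_div_same, div_pow, hsq]
      ring
  by_cases hKne : K.Nonempty
  · -- compactness, minimum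
    have hKclosed : IsClosed K := by
      have h1 : IsClosed {y : Fin n → ℝ | ∑ i, y i = 0} :=
        isClosed_eq (continuous_finset_sum _ fun i _ => continuous_apply i) continuous_const
      have h2 : IsClosed {y : Fin n → ℝ | ∑ i, (y i)^2 = 1} :=
        isClosed_eq (continuous_finset_sum _ fun i _ => (continuous_apply i).pow 2)
          continuous_const
      exact h1.inter h2
    have hKbdd : Bornology.IsBounded K := by
      apply Metric.isBounded_iff_subset_closedBall (0 : Fin n → ℝ) |>.mpr
      refine ⟨1, fun y hy => ?_⟩
      rw [Metric.mem_closedBall, dist_zero_right]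
      rw [pi_norm_le_iff_of_nonneg zero_le_one]
      intro i
      rw [Real.norm_eq_abs, ← Real.sqrt_one, ← Real.sqrt_sq_eq_abs]
      apply Real.sqrt_le_sqrt
      rw [← hy.2]
      exact Finset.single_le_sum (fun j _ => sq_nonneg (y j)) (Finset.mem_univ i)
    have hKcomp : IsCompact K := Metric.isCompact_of_isClosed_isBounded hKclosed hKbdd
    obtain ⟨u, huK, hmin⟩ := hKcomp.exists_isMinOn hKne hQcont.continuousOn
    refine ⟨Q u, ?_, ?_⟩
    · rcases lt_or_eq_of_le (hQ0 u) with h | h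
      · exact h
      exfalso
      -- Q u = 0 forces u constant, contradicting the constraints
      have hzero : ∀ i j, 0 < A i j → u i = u j := by
        intro i j hij
        have h1 : ∑ i, ∑ j, A i j * (u i - u j)^2 = 0 := h.symm
        have h2 : ∀ i ∈ Finset.univ, (0:ℝ) ≤ ∑ j, A i j * (u i - u j)^2 := fun i _ =>
          Finset.sum_nonneg fun j _ => mul_nonneg (hnonneg i j) (sq_nonneg _)
        have h3 := (Finset.sum_eq_zero_iff_of_nonneg h2).mp h1 i (Finset.mem_univ i)
        have h4 := (Finset.sum_eq_zero_iff_of_nonneg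
          (fun j _ => mul_nonneg (hnonneg i j) (sq_nonneg (u i - u j)))).mp h3 j
          (Finset.mem_univ j)
        have h5 : (u i - u j)^2 = 0 := by
          rcases mul_eq_zero.mp h4 with h | h
          · exact absurd h (ne_of_gt hij)
          · exact h
        have := sq_eq_zero_iff.mp h5
        linarith
      have hedge : ∀ i j, (SimpleGraph.fromRel (fun i j : Fin n => 0 < A i j)).Adj i j →
          u i = u j := by
        intro i j hadj
        rw [SimpleGraph.fromRel_adj] at hadj
        rcases hadj.2 with h | h
        · exact hzero i j h
        · have : A i j = A j i := (Matrix.IsSymm.apply hsymm j i)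
          exact hzero i j (this ▸ h)
      have hconst : ∀ i j, u i = u j := by
        intro i j
        obtain ⟨w⟩ := hconn.preconnected i j
        induction w with
        | nil => rfl
        | cons h p ih => exact (hedge _ _ h).trans ih
      obtain ⟨i0⟩ := hne
      have hsum : ∑ i, u i = ∑ _i : Fin n, u i0 :=
        Finset.sum_congr rfl fun i _ => hconst i i0
      rw [huK.1, Finset.sum_const, Finset.card_univ, Fintype.card_fin] at hsum
      have hn0 : u i0 = 0 := by
        have hnpos : 0 < n := Fin.pos i0
        have h1 : (n:ℝ) * u i0 = 0 := by
          have := hsum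
          push_cast [nsmul_eq_mul] at this
          linarith
        rcases mul_eq_zero.mp h1 with h | h
        · exact absurd h (Nat.cast_ne_zero.mpr (by omega))
        · exact h
      have : ∑ i, (u i)^2 = 0 := by
        apply Finset.sum_eq_zero; intro i _
        rw [hconst i i0, hn0]; ring
      rw [huK.2] at this; norm_num at this
    · intro y hy
      by_cases hs : ∑ i, (y i)^2 = 0
      · rw [hs, mul_zero]; exact hQ0 y
      · obtain ⟨hmem, hQval⟩ := hscale y hy hs
        have hle : Q u ≤ Q (fun i => y i / Real.sqrt (∑ i, (y i)^2)) := hmin hmem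
        rw [hQval] at hle
        have hspos : 0 < ∑ i, (y i)^2 :=
          lt_of_le_of_ne (Finset.sum_nonneg fun i _ => sq_nonneg _) (Ne.symm hs)
        show Q u * ∑ i, (y i)^2 ≤ Q y
        calc Q u * ∑ i, (y i)^2 ≤ (Q y / (∑ i, (y i)^2)) * ∑ i, (y i)^2 := by
              apply mul_le_mul_of_nonneg_right hle hspos.le
          _ = Q y := by field_simp
  · -- K empty: every zero-sum vector is zero
    refine ⟨1, one_pos, ?_⟩
    intro y hy
    by_cases hs : ∑ i, (y i)^2 = 0
    · rw [hs, mul_zero]; exact hQ0 y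
    · exfalso
      exact hKne ⟨_, (hscale y hy hs).1⟩


set_option maxHeartbeats 4000000 in
/-- Phase-cohesive basins of attraction on general Kuramoto networks: with
symmetric nonnegative weights whose positive-weight graph is connected, identical natural
frequencies (rotating frame), an equilibrium `θ*` with `|θ*_i - θ*_j| < γ` on all edges
for some `γ ∈ [0, π/2)`, every differentiable solution starting in the open infinity-ball
of radius `π/2 - γ` around `θ*` converges to `θ* + c·(1, ..., 1)` for some `c ∈ ℝ`. -/
theorem phase_cohesive_basin_of_attraction (n : ℕ)
    (A : Matrix (Fin n) (Fin n) ℝ) (hsymm : A.IsSymm) (hnonneg : ∀ i j, 0 ≤ A i j)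
    (hconn : (SimpleGraph.fromRel (fun i j : Fin n => 0 < A i j)).Connected)
    (θs : Fin n → ℝ)
    (heq : ∀ i, ∑ j, A i j * Real.sin (θs j - θs i) = 0)
    (γ : ℝ) (hγ0 : 0 ≤ γ) (hγ2 : γ < Real.pi / 2)
    (hcoh : ∀ i j, 0 < A i j → |θs i - θs j| < γ)
    (θ : ℝ → Fin n → ℝ)
    (hsol : ∀ t ∈ Set.Ici (0 : ℝ), ∀ i,
      HasDerivAt (fun s => θ s i) (∑ j, A i j * Real.sin (θ t j - θ t i)) t)
    (hinit : ∀ k, |θ 0 k - θs k| < Real.pi / 2 - γ) :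
    ∃ c : ℝ, Filter.Tendsto θ Filter.atTop (nhds (fun i => θs i + c)) := by
  classical
  have hπ := Real.pi_pos
  have hne : Nonempty (Fin n) := hconn.nonempty
  obtain ⟨i0⟩ := id hne
  have hnpos : 0 < n := Fin.pos i0
  -- edge phase differences bounded by γ
  have hdist : ∀ i j, 0 < A i j → |θs j - θs i| ≤ γ := fun i j h => by
    rw [abs_sub_comm]; exact (hcoh i j h).le
  -- deviation variables
  set x : ℝ → Fin n → ℝ := fun t i => θ t i - θs i with hxdef
  -- shifted dynamics
  have hx' : ∀ t ∈ Set.Ici (0:ℝ), ∀ i, HasDerivAt (fun s => x s i)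
      (∑ j, A i j * (Real.sin (θ t j - θ t i) - Real.sin (θs j - θs i))) t := by
    intro t ht i
    have h1 := (hsol t ht i).sub_const (θs i)
    have h2 : (∑ j, A i j * (Real.sin (θ t j - θ t i) - Real.sin (θs j - θs i)))
        = ∑ j, A i j * Real.sin (θ t j - θ t i) := by
      simp only [mul_sub]
      rw [Finset.sum_sub_distrib, heq i, sub_zero]
    rw [h2]
    exact h1
  -- the antisymmetric edge flux at time t
  have hGanti : ∀ t, ∀ i j : Fin n,
      A j i * (Real.sin (θ t i - θ t j) - Real.sin (θs i - θs j))
      = -(A i j * (Real.sin (θ t j - θ t i) - Real.sin (θs j - θs i))) := by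
    intro t i j
    have hs : A j i = A i j := Matrix.IsSymm.apply hsymm i j
    rw [hs, show θ t i - θ t j = -(θ t j - θ t i) by ring,
      show θs i - θs j = -(θs j - θs i) by ring, Real.sin_neg, Real.sin_neg]
    ring
  -- argument decomposition along edges
  have hdecomp : ∀ t (i j : Fin n), θ t j - θ t i = (θs j - θs i) + (x t j - x t i) := by
    intro t i j; simp only [hxdef]; ring
  -- radii
  set r0 : ℝ := Finset.univ.sup' (Finset.univ_nonempty) (fun k => |x 0 k|) with hr0def
  have hr0le : ∀ k, |x 0 k| ≤ r0 := fun k => hr0def ▸ Finset.le_sup' (fun k => |x 0 k|) (Finset.mem_univ k)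
  have hr00 : 0 ≤ r0 := le_trans (abs_nonneg _) (hr0le i0)
  have hr0lt : r0 < π/2 - γ := by
    rw [hr0def, Finset.sup'_lt_iff]
    intro k _; exact hinit k
  set r : ℝ := (r0 + (π/2 - γ))/2 with hrdef
  have hr0r : r0 < r := by rw [hrdef]; linarith
  have hrlt : r < π/2 - γ := by rw [hrdef]; linarith
  have hrpos : 0 < r := by rw [hrdef]; linarith
  have hγr : γ + r < π/2 := by linarith
  -- choice of the even power
  obtain ⟨p, hp1, hpn⟩ : ∃ p : ℕ, 1 ≤ p ∧ (n:ℝ) * r0^(2*p) < r^(2*p) := by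
    rcases eq_or_lt_of_le hr00 with h0 | h0
    · refine ⟨1, le_refl 1, ?_⟩
      have hz : (0:ℝ)^(2*1) = 0 := by norm_num
      rw [← h0, hz, mul_zero]
      positivity
    · have hc1 : (r0/r)^2 < 1 := by
        have h1 : r0/r < 1 := (div_lt_one hrpos).mpr hr0r
        have h2 : 0 ≤ r0/r := div_nonneg hr00 hrpos.le
        nlinarith
      obtain ⟨q, hq⟩ := exists_pow_lt_of_lt_one (show (0:ℝ) < (n:ℝ)⁻¹ by positivity) hc1
      refine ⟨q+1, by omega, ?_⟩
      have hcpow : ((r0/r)^2)^(q+1) ≤ ((r0/r)^2)^q :=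
        pow_le_pow_of_le_one (by positivity) hc1.le (Nat.le_succ q)
      have hlt : ((r0/r)^2)^(q+1) < (n:ℝ)⁻¹ := lt_of_le_of_lt hcpow hq
      have hrp : (0:ℝ) < r^(2*(q+1)) := by positivity
      have hnr : (0:ℝ) < (n:ℝ) := by exact_mod_cast hnpos
      rw [← pow_mul, div_pow, div_lt_iff₀ hrp] at hlt
      have hlt2 : r0 ^ (2*(q+1)) < (↑n)⁻¹ * r ^ (2*(q+1)) := by
        rw [mul_comm 2 (q+1)]
        rw [mul_comm] at hlt; exact hlt
      have h5 := mul_lt_mul_of_pos_left hlt2 hnr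
      rw [← mul_assoc, mul_inv_cancel₀ (ne_of_gt hnr), one_mul] at h5
      exact h5
  -- the Lyapunov power function
  set W : ℝ → ℝ := fun t => ∑ k, (x t k)^(2*p) with hWdef
  have hWd : ∀ t ∈ Set.Ici (0:ℝ), HasDerivAt W
      (∑ k, (↑(2*p) * (x t k)^(2*p-1)) *
        (∑ j, A k j * (Real.sin (θ t j - θ t k) - Real.sin (θs j - θs k)))) t := by
    intro t ht
    exact HasDerivAt.fun_sum (fun k _ => (hx' t ht k).pow (2*p))
  have hW0 : W 0 < r^(2*p) := by
    have h1 : W 0 ≤ (n:ℝ) * r0^(2*p) := by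
      calc W 0 ≤ ∑ _k : Fin n, r0^(2*p) := by
            apply Finset.sum_le_sum
            intro k _
            calc (x 0 k)^(2*p) = |x 0 k|^(2*p) := ((even_two_mul p).pow_abs _).symm
              _ ≤ r0^(2*p) := pow_le_pow_left₀ (abs_nonneg _) (hr0le k) _
        _ = (n:ℝ) * r0^(2*p) := by
            rw [Finset.sum_const, Finset.card_univ, Fintype.card_fin, nsmul_eq_mul]
    linarith
  have hreg : ∀ t, W t ≤ r^(2*p) → ∀ k, |x t k| ≤ r := by
    intro t hW k
    have h1 : (x t k)^(2*p) ≤ W t :=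
      Finset.single_le_sum (f := fun k => (x t k)^(2*p))
        (fun j _ => by
          show (0:ℝ) ≤ x t j ^ (2*p)
          rw [pow_mul]; exact pow_nonneg (sq_nonneg _) p) (Finset.mem_univ k)
    have h2 : |x t k|^(2*p) ≤ r^(2*p) := by
      rw [(even_two_mul p).pow_abs]
      linarith
    exact le_of_pow_le_pow_left₀ (by omega) hrpos.le h2
  have hWnonpos : ∀ t ∈ Set.Ici (0:ℝ), (∀ k, |x t k| ≤ r) →
      (∑ k, (↑(2*p) * (x t k)^(2*p-1)) *
        (∑ j, A k j * (Real.sin (θ t j - θ t k) - Real.sin (θs j - θs k)))) ≤ 0 := by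
    intro t ht hb
    have hre : (∑ k, (↑(2*p) * (x t k)^(2*p-1)) *
        (∑ j, A k j * (Real.sin (θ t j - θ t k) - Real.sin (θs j - θs k))))
        = ∑ k, ∑ j, (A k j * (Real.sin (θ t j - θ t k) - Real.sin (θs j - θs k)))
            * (↑(2*p) * (x t k)^(2*p-1)) := by
      apply Finset.sum_congr rfl; intro k _
      rw [Finset.mul_sum]
      apply Finset.sum_congr rfl; intro j _
      ring
    rw [hre, sum_antisym_mul _ (fun i j => hGanti t i j) (fun k => (↑(2*p) * (x t k)^(2*p-1)))]
    have hS : (∑ i, ∑ j, (A i j * (Real.sin (θ t j - θ t i) - Real.sin (θs j - θs i)))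
        * ((↑(2*p) * (x t i)^(2*p-1)) - (↑(2*p) * (x t j)^(2*p-1)))) ≤ 0 := by
      apply Finset.sum_nonpos; intro i _
      apply Finset.sum_nonpos; intro j _
      rcases eq_or_lt_of_le (hnonneg i j) with hA | hA
      · rw [← hA, zero_mul, zero_mul]
      · have hD := hdist i j hA
        have hδ : |x t j - x t i| ≤ 2*r := by
          have h1 := abs_sub (x t j) (x t i)
          have h2 := hb j; have h3 := hb i; linarith
        have hodd : Odd (2*p-1) := ⟨p-1, by omega⟩
        have hcast : (0:ℝ) ≤ (↑(2*p) : ℝ) := by positivity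
        rcases le_total (x t i) (x t j) with hij | hij
        · have hg : 0 ≤ Real.sin (θ t j - θ t i) - Real.sin (θs j - θs i) := by
            rw [hdecomp t i j]
            exact sin_diff_nonneg hγ0 hrpos hγr hD hδ (by linarith)
          have hmono : (x t i)^(2*p-1) ≤ (x t j)^(2*p-1) := hodd.strictMono_pow.monotone hij
          apply mul_nonpos_of_nonneg_of_nonpos (mul_nonneg hA.le hg)
          have := mul_le_mul_of_nonneg_left hmono hcast
          linarith
        · have hg : Real.sin (θ t j - θ t i) - Real.sin (θs j - θs i) ≤ 0 := by
            rw [hdecomp t i j]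
            exact sin_diff_nonpos hγ0 hrpos hγr hD hδ (by linarith)
          have hmono : (x t j)^(2*p-1) ≤ (x t i)^(2*p-1) := hodd.strictMono_pow.monotone hij
          apply mul_nonpos_of_nonpos_of_nonneg (mul_nonpos_of_nonneg_of_nonpos hA.le hg)
          have := mul_le_mul_of_nonneg_left hmono hcast
          linarith
    linarith
  have hWcont : ContinuousOn W (Set.Ici 0) :=
    fun t ht => ((hWd t ht).continuousAt).continuousWithinAt
  have hWle : ∀ t, 0 ≤ t → W t ≤ W 0 := by
    apply cont_induction hWcont hW0
    intro T hT hB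
    have hanti : AntitoneOn W (Set.Icc 0 T) := by
      apply antitoneOn_of_deriv_nonpos (convex_Icc 0 T)
      · exact hWcont.mono (fun z hz => hz.1)
      · intro s hs
        rw [interior_Icc] at hs
        exact ((hWd s (le_of_lt hs.1)).differentiableAt).differentiableWithinAt
      · intro s hs
        rw [interior_Icc] at hs
        rw [(hWd s (le_of_lt hs.1)).deriv]
        exact hWnonpos s (le_of_lt hs.1) (hreg s (hB s ⟨hs.1.le, hs.2.le⟩))
    intro s hs
    exact hanti (Set.left_mem_Icc.mpr hT) hs hs.1
  have hball : ∀ t, 0 ≤ t → ∀ k, |x t k| ≤ r := fun t ht k =>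
    hreg t (le_trans (hWle t ht) hW0.le) k
  -- conservation of the mean
  have hSd : ∀ t ∈ Set.Ici (0:ℝ), HasDerivAt (fun s => ∑ k, x s k) 0 t := by
    intro t ht
    have h := HasDerivAt.fun_sum (fun k (_ : k ∈ Finset.univ) => hx' t ht k)
    have h0 : (∑ k, ∑ j, A k j * (Real.sin (θ t j - θ t k) - Real.sin (θs j - θs k))) = 0 :=
      sum_antisym_zero _ (fun i j => hGanti t i j)
    rw [h0] at h
    exact h
  have hScons : ∀ t ∈ Set.Ici (0:ℝ), ∑ k, x t k = ∑ k, x 0 k :=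
    const_of_deriv_zero hSd
  have hn0 : ((n:ℝ)) ≠ 0 := by positivity
  set c : ℝ := (∑ k, x 0 k) / n with hcdef
  have hzsum : ∀ t, 0 ≤ t → ∑ k, (x t k - c) = 0 := by
    intro t ht
    rw [Finset.sum_sub_distrib, hScons t ht, Finset.sum_const, Finset.card_univ,
      Fintype.card_fin, nsmul_eq_mul, hcdef]
    field_simp; ring
  obtain ⟨lam, hlam, hfied⟩ := fiedler A hsymm hnonneg hconn
  set κ : ℝ := 2 * Real.cos (γ + r) / π with hκdef
  have hκ : 0 < κ := by
    have hc : 0 < Real.cos (γ + r) := Real.cos_pos_of_mem_Ioo ⟨by linarith, hγr⟩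
    rw [hκdef]; positivity
  set ρ : ℝ := κ * lam with hρdef
  have hρ : 0 < ρ := mul_pos hκ hlam
  set V : ℝ → ℝ := fun t => ∑ k, (x t k - c)^2 with hVdef
  set VD : ℝ → ℝ := fun t => ∑ k, (2 * (x t k - c)) *
      (∑ j, A k j * (Real.sin (θ t j - θ t k) - Real.sin (θs j - θs k))) with hVDdef
  have hVd : ∀ t ∈ Set.Ici (0:ℝ), HasDerivAt V (VD t) t := by
    intro t ht
    have h : HasDerivAt (fun s => ∑ k, (x s k - c)^2)
        (∑ k, ((2:ℕ) * (x t k - c)^(2-1)) *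
          (∑ j, A k j * (Real.sin (θ t j - θ t k) - Real.sin (θs j - θs k)))) t :=
      HasDerivAt.fun_sum (fun k _ => ((hx' t ht k).sub_const c).pow 2)
    convert h using 1
    rw [hVDdef]
    apply Finset.sum_congr rfl; intro k _
    norm_num
  have hVDle : ∀ t, 0 ≤ t → VD t ≤ -ρ * V t := by
    intro t ht
    have hre : VD t = ∑ k, ∑ j,
        (A k j * (Real.sin (θ t j - θ t k) - Real.sin (θs j - θs k))) * (2 * (x t k - c)) := by
      rw [hVDdef]
      apply Finset.sum_congr rfl; intro k _
      rw [Finset.mul_sum]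
      apply Finset.sum_congr rfl; intro j _
      ring
    rw [hre, sum_antisym_mul _ (fun i j => hGanti t i j) (fun k => 2 * (x t k - c))]
    have hterm : ∀ i j, (A i j * (Real.sin (θ t j - θ t i) - Real.sin (θs j - θs i)))
        * ((2*(x t i - c)) - (2*(x t j - c)))
        ≤ -(2*κ) * (A i j * (x t j - x t i)^2) := by
      intro i j
      rcases eq_or_lt_of_le (hnonneg i j) with hA | hA
      · rw [← hA]; simp
      · have hD := hdist i j hA
        have hδ : |x t j - x t i| ≤ 2*r := by
          have h1 := abs_sub (x t j) (x t i)
          have h2 := hball t ht j; have h3 := hball t ht i; linarith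
        have hq := sin_quant hγ0 hrpos hγr hD hδ
        rw [hdecomp t i j]
        have h2 : A i j * (2 * Real.cos (γ + r) / π * (x t j - x t i)^2)
            ≤ A i j * ((x t j - x t i) * (Real.sin ((θs j - θs i) + (x t j - x t i))
              - Real.sin (θs j - θs i))) :=
          mul_le_mul_of_nonneg_left hq (hnonneg i j)
        rw [hκdef]
        nlinarith [h2]
    have hsum2 : (∑ i, ∑ j, (A i j * (Real.sin (θ t j - θ t i) - Real.sin (θs j - θs i)))
        * ((2*(x t i - c)) - (2*(x t j - c))))
        ≤ ∑ i, ∑ j, -(2*κ) * (A i j * (x t j - x t i)^2) :=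
      Finset.sum_le_sum (fun i _ => Finset.sum_le_sum (fun j _ => hterm i j))
    have hQeq : ∑ i, ∑ j, -(2*κ) * (A i j * (x t j - x t i)^2)
        = -(2*κ) * ∑ i, ∑ j, A i j * (x t j - x t i)^2 := by
      simp only [← Finset.mul_sum]
    have hfval : lam * (∑ k, (x t k - c)^2) ≤
        ∑ i, ∑ j, A i j * ((x t i - c) - (x t j - c))^2 :=
      hfied (fun k => x t k - c) (hzsum t ht)
    have heq2 : (∑ i, ∑ j, A i j * ((x t i - c) - (x t j - c))^2)
        = ∑ i, ∑ j, A i j * (x t j - x t i)^2 := by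
      apply Finset.sum_congr rfl; intro i _
      apply Finset.sum_congr rfl; intro j _
      have hlin : (x t i - c) - (x t j - c) = -(x t j - x t i) := by ring
      rw [hlin, neg_sq]
    rw [heq2] at hfval
    have hVnn : 0 ≤ V t := Finset.sum_nonneg (fun k _ => sq_nonneg _)
    rw [hρdef]
    nlinarith [hsum2, hfval, hκ, hQeq]
  -- exponential decay of V
  set E : ℝ → ℝ := fun t => V t * Real.exp (ρ * t) with hEdef
  have hEd : ∀ t ∈ Set.Ici (0:ℝ), HasDerivAt E
      (VD t * Real.exp (ρ*t) + V t * (Real.exp (ρ*t) * ρ)) t := by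
    intro t ht
    have hexp : HasDerivAt (fun s => Real.exp (ρ * s)) (Real.exp (ρ*t) * ρ) t := by
      have h1 : HasDerivAt (fun s : ℝ => ρ * s) (ρ * 1) t := (hasDerivAt_id t).const_mul ρ
      have h2 := h1.exp
      convert h2 using 1
      ring
    exact (hVd t ht).mul hexp
  have hEanti : AntitoneOn E (Set.Ici 0) := by
    apply antitoneOn_of_deriv_nonpos (convex_Ici 0)
    · exact fun t ht => ((hEd t ht).continuousAt).continuousWithinAt
    · intro s hs; rw [interior_Ici] at hs
      exact ((hEd s (Set.mem_Ici.mpr (le_of_lt hs))).differentiableAt).differentiableWithinAt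
    · intro s hs; rw [interior_Ici] at hs
      rw [(hEd s (Set.mem_Ici.mpr (le_of_lt hs))).deriv]
      have h1 := hVDle s (le_of_lt hs)
      have h2 : (0:ℝ) < Real.exp (ρ*s) := Real.exp_pos _
      nlinarith [mul_le_mul_of_nonneg_right h1 h2.le]
  have hVbound : ∀ t, 0 ≤ t → V t ≤ V 0 * Real.exp (-(ρ*t)) := by
    intro t ht
    have h1 : E t ≤ E 0 := hEanti Set.self_mem_Ici ht ht
    have h1' : V t * Real.exp (ρ*t) ≤ V 0 := by
      rw [hEdef] at h1
      simpa using h1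
    have h2 : (0:ℝ) < Real.exp (-(ρ*t)) := Real.exp_pos _
    have h3 := mul_le_mul_of_nonneg_right h1' h2.le
    calc V t = V t * Real.exp (ρ*t) * Real.exp (-(ρ*t)) := by
          rw [mul_assoc, ← Real.exp_add, add_neg_cancel, Real.exp_zero, mul_one]
      _ ≤ V 0 * Real.exp (-(ρ*t)) := h3
  -- conclusion
  refine ⟨c, ?_⟩
  rw [tendsto_pi_nhds]
  intro i
  have hVtend : Filter.Tendsto (fun t => V 0 * Real.exp (-(ρ*t))) Filter.atTop (nhds 0) := by
    have h1 : Filter.Tendsto (fun t : ℝ => ρ*t) Filter.atTop Filter.atTop :=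
      Filter.Tendsto.const_mul_atTop hρ Filter.tendsto_id
    have h2 := Real.tendsto_exp_neg_atTop_nhds_zero.comp h1
    have h3 := h2.const_mul (V 0)
    simpa [Function.comp_def] using h3
  have hsq : Filter.Tendsto (fun t => (x t i - c)^2) Filter.atTop (nhds 0) := by
    apply squeeze_zero'
    · exact Filter.eventually_atTop.mpr ⟨0, fun t ht => sq_nonneg _⟩
    · refine Filter.eventually_atTop.mpr ⟨0, fun t ht => ?_⟩
      have h1 : (x t i - c)^2 ≤ V t :=
        Finset.single_le_sum (f := fun k => (x t k - c)^2)
          (fun j _ => sq_nonneg _) (Finset.mem_univ i)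
      exact le_trans h1 (hVbound t ht)
    · exact hVtend
  have habs : Filter.Tendsto (fun t => |x t i - c|) Filter.atTop (nhds 0) := by
    have h2 := (Real.continuous_sqrt.tendsto 0).comp hsq
    simp only [Function.comp_def, Real.sqrt_sq_eq_abs, Real.sqrt_zero] at h2
    exact h2
  have hxc : Filter.Tendsto (fun t => x t i - c) Filter.atTop (nhds 0) := by
    rw [tendsto_zero_iff_norm_tendsto_zero]
    simpa [Real.norm_eq_abs] using habs
  have h3 := hxc.add_const (θs i + c)
  have h4 : (fun t => (x t i - c) + (θs i + c)) = fun t => θ t i := by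
    funext t; simp only [hxdef]; ring
  rw [h4] at h3
  simpa using h3
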